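/- Let G be a finite simple graph on n ≥ 1 vertices with Kirchhoff (Laplacian) matrix K. Then for every 1 ≤ k ≤ n, the k-th smallest eigenvalue of K satisfies λ_k ≤ d_k + d_{k−1}, where d_1 ≤ … ≤ d_n are the vertex degrees of G listed in increasing order and d_0 = 0. -/

import Mathlib

open Matrix Finset

lemma sum_dot {m : ℕ} (f : Fin m → Fin m → ℝ) (y : Fin m → ℝ) :
    (∑ i, f i) ⬝ᵥ y = ∑ i, f i ⬝ᵥ y := by
  simp only [dotProduct, Finset.sum_apply, Finset.sum_mul]
  exact Finset.sum_comm

lemma dot_sum {m : ℕ} (x : Fin m → ℝ) (g : Fin m → Fin m → ℝ) :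
    x ⬝ᵥ (∑ j, g j) = ∑ j, x ⬝ᵥ g j := by
  simp only [dotProduct, Finset.sum_apply, Finset.mul_sum]
  exact Finset.sum_comm

lemma dot_ortho {m : ℕ} {M : Matrix (Fin m) (Fin m) ℝ} (hM : M.IsHermitian) (i j : Fin m) :
    (hM.eigenvectorBasis i : Fin m → ℝ) ⬝ᵥ (hM.eigenvectorBasis j : Fin m → ℝ)
      = if i = j then 1 else 0 := by
  have h := hM.eigenvectorBasis.orthonormal
  rw [orthonormal_iff_ite] at h
  have h2 := h i j
  rw [PiLp.inner_apply] at h2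
  simpa [dotProduct, mul_comm] using h2

lemma both_expand {m : ℕ} {M : Matrix (Fin m) (Fin m) ℝ} (hM : M.IsHermitian)
    (x : EuclideanSpace ℝ (Fin m)) :
    (x : Fin m → ℝ) ⬝ᵥ (M *ᵥ x) = ∑ j, hM.eigenvalues j * (hM.eigenvectorBasis.repr x j) ^ 2
    ∧ (x : Fin m → ℝ) ⬝ᵥ (x : Fin m → ℝ) = ∑ j, (hM.eigenvectorBasis.repr x j) ^ 2 := by
  set v : Fin m → (Fin m → ℝ) := fun j => (hM.eigenvectorBasis j : Fin m → ℝ) with hv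
  set c : Fin m → ℝ := fun j => hM.eigenvectorBasis.repr x j with hcdef
  have hxf : (x : Fin m → ℝ) = ∑ j, c j • v j := by
    have h := (hM.eigenvectorBasis.sum_repr x).symm
    have h2 := congrArg WithLp.ofLp h
    rw [WithLp.ofLp_sum] at h2
    exact h2
  have hMv : ∀ j, M *ᵥ v j = hM.eigenvalues j • v j := fun j => hM.mulVec_eigenvectorBasis j
  have hov : ∀ i j, v i ⬝ᵥ v j = if i = j then 1 else 0 := dot_ortho hM
  have key : ∀ (lam : Fin m → ℝ),
      (∑ i, c i • v i) ⬝ᵥ (∑ j, (lam j * c j) • v j) = ∑ j, lam j * c j ^ 2 := by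
    intro lam
    rw [sum_dot]
    refine Finset.sum_congr rfl fun i _ => ?_
    rw [smul_dotProduct, dot_sum]
    simp only [dotProduct_smul, hov, smul_eq_mul, mul_ite, mul_one, mul_zero]
    rw [Finset.sum_ite_eq Finset.univ i]
    simp only [Finset.mem_univ, if_true]
    ring
  constructor
  · have h1 : M *ᵥ (x : Fin m → ℝ) = ∑ j, (hM.eigenvalues j * c j) • v j := by
      rw [hxf, ← mulVecLin_apply, map_sum]
      refine Finset.sum_congr rfl fun j _ => ?_
      rw [_root_.map_smul, mulVecLin_apply, hMv, smul_smul, mul_comm]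
    rw [h1]
    conv_lhs => rw [hxf]
    exact key _
  · conv_lhs => rw [hxf]
    have := key (fun _ => 1)
    simpa using this


lemma eig_sorted_le {m : ℕ} {M : Matrix (Fin m) (Fin m) ℝ} (hM : M.IsHermitian)
    (i : Fin m) (U : Submodule ℝ (EuclideanSpace ℝ (Fin m)))
    (hU : (i : ℕ) + 1 ≤ Module.finrank ℝ U) {cbd : ℝ}
    (hc : ∀ x ∈ U, (x : Fin m → ℝ) ⬝ᵥ (M *ᵥ x) ≤ cbd * ((x : Fin m → ℝ) ⬝ᵥ x)) :
    hM.eigenvalues (Tuple.sort hM.eigenvalues i) ≤ cbd := by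
  classical
  set σ := Tuple.sort hM.eigenvalues with hσ
  set b := hM.eigenvectorBasis.toBasis with hb
  set J : Finset (Fin m) := (Finset.Ici i).image σ with hJ
  set W : Submodule ℝ (EuclideanSpace ℝ (Fin m)) := Submodule.span ℝ (⇑b '' ↑J) with hW
  have hJcard : J.card = m - i := by
    rw [hJ, Finset.card_image_of_injective _ σ.injective, Fin.card_Ici]
  have hWrank : Module.finrank ℝ W = m - (i : ℕ) := by
    have hli : LinearIndependent ℝ (fun j : ↥J => b j) :=
      b.linearIndependent.comp _ Subtype.val_injective
    have hR : Set.range (fun j : ↥J => b j) = ⇑b '' ↑J := by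
      ext z
      simp
    rw [hW, ← hR, finrank_span_eq_card hli, Fintype.card_coe, hJcard]
  have hW2 : ∀ x ∈ W, hM.eigenvalues (σ i) * ((x : Fin m → ℝ) ⬝ᵥ x)
      ≤ (x : Fin m → ℝ) ⬝ᵥ (M *ᵥ x) := by
    intro x hx
    obtain ⟨hq, hs⟩ := both_expand hM x
    rw [hq, hs, Finset.mul_sum]
    refine Finset.sum_le_sum fun j _ => ?_
    by_cases hj : hM.eigenvectorBasis.repr x j = 0
    · simp [hj]
    · have hsupp : ↑(b.repr x).support ⊆ (↑J : Set (Fin m)) := (b.mem_span_image).mp hx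
      have hjJ : j ∈ J := by
        have : j ∈ (b.repr x).support := by
          rw [Finsupp.mem_support_iff]
          rw [hb]
          rw [hM.eigenvectorBasis.coe_toBasis_repr_apply]
          exact hj
        exact_mod_cast hsupp this
      obtain ⟨j', hj', rfl⟩ := Finset.mem_image.mp hjJ
      have hmono : hM.eigenvalues (σ i) ≤ hM.eigenvalues (σ j') :=
        Tuple.monotone_sort hM.eigenvalues (Finset.mem_Ici.mp hj')
      exact mul_le_mul_of_nonneg_right hmono (sq_nonneg _)
  have hfin : 1 ≤ Module.finrank ℝ ↥(U ⊓ W) := by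
    have h1 := Submodule.finrank_sup_add_finrank_inf_eq U W
    have h2 : Module.finrank ℝ ↥(U ⊔ W) ≤ m := by
      have := Submodule.finrank_le (U ⊔ W)
      rwa [finrank_euclideanSpace_fin] at this
    have hi : (i : ℕ) < m := i.isLt
    omega
  obtain ⟨x, hxUW, hx0⟩ : ∃ x ∈ U ⊓ W, x ≠ 0 := by
    by_contra h
    push_neg at h
    have hbot : U ⊓ W = ⊥ := by
      rw [Submodule.eq_bot_iff]
      exact h
    rw [hbot, finrank_bot] at hfin
    omega
  have hxx : 0 < (x : Fin m → ℝ) ⬝ᵥ (x : Fin m → ℝ) := by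
    have hform : (x : Fin m → ℝ) ⬝ᵥ (x : Fin m → ℝ) = ∑ a, (x a)^2 := by
      simp [dotProduct, sq]
    rw [hform]
    have hex : ∃ a, x a ≠ 0 := by
      by_contra hall
      push_neg at hall
      exact hx0 (by ext a; exact hall a)
    obtain ⟨a, ha⟩ := hex
    exact Finset.sum_pos' (fun b _ => sq_nonneg _) ⟨a, Finset.mem_univ a, by positivity⟩
  have h1 := hW2 x hxUW.2
  have h2 := hc x hxUW.1
  exact (mul_le_mul_iff_of_pos_right hxx).mp (le_trans h1 h2)


lemma eig_le_of_rows {k : ℕ} {M : Matrix (Fin k) (Fin k) ℝ} (hM : M.IsHermitian)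
    (D : Fin k → ℝ)
    (hrow : ∀ i, ∑ j ∈ Finset.univ.erase i, |M i j| ≤ D i)
    (hdiag : ∀ i, M i i = D i)
    {B : ℝ} (hB1 : ∀ i, D i ≤ B)
    (hB2 : ∀ i j, i ≠ j → D i + D j ≤ B)
    (i : Fin k) : hM.eigenvalues i ≤ B := by
  classical
  by_contra hgt
  push_neg at hgt
  set μ := hM.eigenvalues i with hμ
  set y : Fin k → ℝ := (hM.eigenvectorBasis i : Fin k → ℝ) with hy
  have hDnn : ∀ j, 0 ≤ D j := fun j =>
    le_trans (Finset.sum_nonneg fun _ _ => abs_nonneg _) (hrow j)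
  have hMy : M *ᵥ y = μ • y := hM.mulVec_eigenvectorBasis i
  have hy0 : y ≠ 0 := by
    intro h
    have := hM.eigenvectorBasis.orthonormal.ne_zero i
    exact this (by ext a; exact congrFun h a)
  -- index of max |y|
  have hne : (Finset.univ : Finset (Fin k)).Nonempty := ⟨i, Finset.mem_univ i⟩
  obtain ⟨u, -, hu⟩ := Finset.exists_max_image Finset.univ (fun j => |y j|) hne
  have hu' : ∀ j, |y j| ≤ |y u| := fun j => hu j (Finset.mem_univ j)
  have ha : 0 < |y u| := by
    rcases (abs_nonneg (y u)).lt_or_eq with h | h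
    · exact h
    · exfalso
      apply hy0
      funext j
      have := hu' j
      rw [← h] at this
      simpa using le_antisymm this (abs_nonneg _)
  -- row equation at a vertex
  have hroweq : ∀ w : Fin k, (μ - D w) * y w = ∑ j ∈ Finset.univ.erase w, M w j * y j := by
    intro w
    have h1 : (M *ᵥ y) w = μ * y w := by rw [hMy]; simp
    have h2 : (M *ᵥ y) w = M w w * y w + ∑ j ∈ Finset.univ.erase w, M w j * y j := by
      rw [mulVec, dotProduct, ← Finset.add_sum_erase _ _ (Finset.mem_univ w)]
    rw [hdiag w] at h2
    rw [h1] at h2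
    linarith [h2]
  have habs : ∀ w : Fin k, |μ - D w| * |y w| ≤ ∑ j ∈ Finset.univ.erase w, |M w j| * |y j| := by
    intro w
    rw [← abs_mul, hroweq w]
    calc |∑ j ∈ Finset.univ.erase w, M w j * y j|
        ≤ ∑ j ∈ Finset.univ.erase w, |M w j * y j| := Finset.abs_sum_le_sum_abs _ _
      _ = ∑ j ∈ Finset.univ.erase w, |M w j| * |y j| := by simp [abs_mul]
  set T : Finset (Fin k) := (Finset.univ.erase u).filter (fun j => M u j ≠ 0) with hT
  have hsumT : ∑ j ∈ Finset.univ.erase u, |M u j| * |y j| = ∑ j ∈ T, |M u j| * |y j| := by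
    refine (Finset.sum_subset (Finset.filter_subset _ _) fun j hj hjT => ?_).symm
    have : M u j = 0 := by
      by_contra h
      exact hjT (Finset.mem_filter.mpr ⟨hj, h⟩)
    simp [this]
  have hμu : D u < μ := lt_of_le_of_lt (hB1 u) hgt
  have hTne : T.Nonempty := by
    rcases Finset.eq_empty_or_nonempty T with h | h
    · exfalso
      have h0 := habs u
      rw [hsumT, h, Finset.sum_empty] at h0
      have : |μ - D u| * |y u| = (μ - D u) * |y u| := by
        rw [abs_of_pos (by linarith)]
      nlinarith
    · exact h
  obtain ⟨w, hwT, hw⟩ := Finset.exists_max_image T (fun j => |y j|) hTne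
  have hwu : w ≠ u := (Finset.mem_erase.mp (Finset.mem_filter.mp hwT).1).1
  -- bound row u
  have h1 : (μ - D u) * |y u| ≤ D u * |y w| := by
    have hstep : ∑ j ∈ T, |M u j| * |y j| ≤ (∑ j ∈ T, |M u j|) * |y w| := by
      rw [Finset.sum_mul]
      exact Finset.sum_le_sum fun j hj =>
        mul_le_mul_of_nonneg_left (hw j hj) (abs_nonneg _)
    have hsub : ∑ j ∈ T, |M u j| ≤ D u := by
      refine le_trans (Finset.sum_le_sum_of_subset_of_nonneg (Finset.filter_subset _ _)
        fun j _ _ => abs_nonneg _) (hrow u)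
    have := habs u
    rw [hsumT, abs_of_pos (by linarith : (0:ℝ) < μ - D u)] at this
    calc (μ - D u) * |y u| ≤ ∑ j ∈ T, |M u j| * |y j| := this
      _ ≤ (∑ j ∈ T, |M u j|) * |y w| := hstep
      _ ≤ D u * |y w| := mul_le_mul_of_nonneg_right hsub (abs_nonneg _)
  -- bound row w
  have hμw : D w < μ := lt_of_le_of_lt (hB1 w) hgt
  have h2 : (μ - D w) * |y w| ≤ D w * |y u| := by
    have hstep : ∑ j ∈ Finset.univ.erase w, |M w j| * |y j|
        ≤ (∑ j ∈ Finset.univ.erase w, |M w j|) * |y u| := by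
      rw [Finset.sum_mul]
      exact Finset.sum_le_sum fun j _ =>
        mul_le_mul_of_nonneg_left (hu' j) (abs_nonneg _)
    have := habs w
    rw [abs_of_pos (by linarith : (0:ℝ) < μ - D w)] at this
    calc (μ - D w) * |y w| ≤ _ := this
      _ ≤ (∑ j ∈ Finset.univ.erase w, |M w j|) * |y u| := hstep
      _ ≤ D w * |y u| := mul_le_mul_of_nonneg_right (hrow w) (abs_nonneg _)
  have hBuw : D u + D w < μ := lt_of_le_of_lt (hB2 u w (Ne.symm hwu)) hgt
  have hyw : 0 < |y w| := by
    rcases (abs_nonneg (y w)).lt_or_eq with h | h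
    · exact h
    · exfalso; rw [← h] at h1; nlinarith
  nlinarith [mul_le_mul h1 h2 (mul_nonneg (by linarith) (abs_nonneg _)) (mul_nonneg (hDnn u) (abs_nonneg _)), hDnn u, hDnn w,
    mul_pos ha hyw]


section restrict
variable {n k : ℕ}

lemma dot_mulVec_expand {m : ℕ} (Q : Matrix (Fin m) (Fin m) ℝ) (z : Fin m → ℝ) :
    z ⬝ᵥ (Q *ᵥ z) = ∑ a, ∑ b, z a * (Q a b * z b) := by
  simp [dotProduct, mulVec, Finset.mul_sum]

lemma dot_mulVec_restrict (P : Matrix (Fin n) (Fin n) ℝ) (ι : Fin k → Fin n)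
    (hinj : Function.Injective ι) (x : Fin n → ℝ)
    (hsupp : ∀ v, v ∉ Set.range ι → x v = 0) :
    x ⬝ᵥ (P *ᵥ x) = (fun j => x (ι j)) ⬝ᵥ (P.submatrix ι ι *ᵥ fun j => x (ι j)) := by
  rw [dot_mulVec_expand, dot_mulVec_expand]
  set S : Finset (Fin n) := Finset.univ.image ι with hS
  have hmem : ∀ v, v ∈ S → v ∈ Set.range ι := by
    intro v hv
    simp only [hS, Finset.mem_image] at hv
    obtain ⟨j, -, rfl⟩ := hv
    exact ⟨j, rfl⟩
  have hout : ∀ v, v ∉ S → x v = 0 := by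
    intro v hv
    refine hsupp v fun ⟨j, hj⟩ => hv ?_
    simp [hS, ← hj]
  have h1 : ∑ a, ∑ b, x a * (P a b * x b) = ∑ a ∈ S, ∑ b ∈ S, x a * (P a b * x b) := by
    rw [← Finset.sum_subset (Finset.subset_univ S)
      (fun a _ haS => by simp [hout a haS])]
    refine Finset.sum_congr rfl fun a _ => ?_
    rw [← Finset.sum_subset (Finset.subset_univ S)
      (fun b _ hbS => by simp [hout b hbS])]
  rw [h1, hS]
  rw [Finset.sum_image (fun a _ b _ h => hinj h)]
  refine Finset.sum_congr rfl fun p _ => ?_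
  rw [Finset.sum_image (fun a _ b _ h => hinj h)]
  simp [Matrix.submatrix_apply]

lemma dot_restrict (ι : Fin k → Fin n) (hinj : Function.Injective ι) (x : Fin n → ℝ)
    (hsupp : ∀ v, v ∉ Set.range ι → x v = 0) :
    x ⬝ᵥ x = (fun j => x (ι j)) ⬝ᵥ (fun j => x (ι j)) := by
  have hout : ∀ v, v ∉ Finset.univ.image ι → x v = 0 := by
    intro v hv
    refine hsupp v fun ⟨j, hj⟩ => hv ?_
    simp [← hj]
  unfold dotProduct
  rw [← Finset.sum_subset (Finset.subset_univ (Finset.univ.image ι))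
    (fun a _ haS => by simp [hout a haS])]
  rw [Finset.sum_image (fun a _ b _ h => hinj h)]

end restrict

/-- For a finite simple graph on `n ≥ 1` vertices with Kirchhoff (Laplacian)
matrix `K`, the `k`-th smallest eigenvalue satisfies `λ_k ≤ d_k + d_{k-1}`,
where `d_1 ≤ ⋯ ≤ d_n` are the sorted vertex degrees and `d_0 = 0`. -/
theorem graph_laplacian_eigenvalue_upper_bound
    (n : ℕ) (hn : 1 ≤ n) (G : SimpleGraph (Fin n)) [DecidableRel G.Adj]
    (hK : (G.lapMatrix ℝ).IsHermitian)
    (lam : Fin n → ℝ)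
    (hlam : lam = hK.eigenvalues ∘ Tuple.sort hK.eigenvalues)
    (d : Fin n → ℕ)
    (hd : d = (fun v => G.degree v) ∘ Tuple.sort (fun v => G.degree v)) :
    ∀ (k : ℕ) (hk1 : 1 ≤ k) (hkn : k ≤ n),
      lam ⟨k - 1, by omega⟩ ≤
        (d ⟨k - 1, by omega⟩ : ℝ) +
          (if h : 2 ≤ k then (d ⟨k - 2, by omega⟩ : ℝ) else 0) := by
  intro k hk1 hkn
  have hdm : Monotone d := hd ▸ Tuple.monotone_sort (fun v => G.degree v)
  set ι : Fin k → Fin n := fun j => Tuple.sort (fun v => G.degree v) (Fin.castLE hkn j) with hι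
  have hinj : Function.Injective ι := fun a b h =>
    Fin.castLE_injective hkn ((Tuple.sort (fun v => G.degree v)).injective h)
  have hdeg : ∀ j : Fin k, G.degree (ι j) = d (Fin.castLE hkn j) := by
    intro j; rw [hd]; rfl
  set Breal : ℝ := (d ⟨k - 1, by omega⟩ : ℝ) +
      (if h : 2 ≤ k then (d ⟨k - 2, by omega⟩ : ℝ) else 0) with hB
  set N := (G.lapMatrix ℝ).submatrix ι ι with hNdef
  have hN : N.IsHermitian := hK.submatrix ι
  set D : Fin k → ℝ := fun j => (G.degree (ι j) : ℝ) with hD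
  -- diagonal entries
  have hdiagN : ∀ j, N j j = D j := by
    intro j
    simp [hNdef, Matrix.submatrix_apply, SimpleGraph.lapMatrix, SimpleGraph.degMatrix,
      Matrix.sub_apply, Matrix.diagonal_apply_eq, SimpleGraph.adjMatrix_apply, hD]
  -- off-diagonal abs values
  have hoffN : ∀ j j' : Fin k, j' ≠ j → |N j j'| = if G.Adj (ι j) (ι j') then (1:ℝ) else 0 := by
    intro j j' hne
    have hιne : ι j ≠ ι j' := fun h => hne (hinj h).symm
    have : N j j' = 0 - (if G.Adj (ι j) (ι j') then (1:ℝ) else 0) := by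
      simp [hNdef, Matrix.submatrix_apply, SimpleGraph.lapMatrix, SimpleGraph.degMatrix,
        Matrix.sub_apply, Matrix.diagonal_apply_ne _ hιne, SimpleGraph.adjMatrix_apply]
    rw [this]
    split_ifs <;> simp
  -- row sums
  have hrowN : ∀ j, ∑ j' ∈ Finset.univ.erase j, |N j j'| ≤ D j := by
    intro j
    have hcongr : ∑ j' ∈ Finset.univ.erase j, |N j j'|
        = ∑ j' ∈ Finset.univ.erase j, if G.Adj (ι j) (ι j') then (1:ℝ) else 0 :=
      Finset.sum_congr rfl fun j' hj' => hoffN j j' (Finset.mem_erase.mp hj').1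
    rw [hcongr, Finset.sum_boole, hD]
    simp only [hD]
    have hcard : #(filter (fun x => G.Adj (ι j) (ι x)) (univ.erase j)) ≤ G.degree (ι j) := by
      rw [← SimpleGraph.card_neighborFinset_eq_degree]
      refine Finset.card_le_card_of_injOn ι (fun a ha => ?_) (hinj.injOn)
      exact (SimpleGraph.mem_neighborFinset _ _ _).mpr (Finset.mem_filter.mp ha).2
    exact_mod_cast hcard
  -- degree bounds
  have hBnn : (0:ℝ) ≤ if h : 2 ≤ k then (d ⟨k - 2, by omega⟩ : ℝ) else 0 := by
    split <;> positivity
  have hB1 : ∀ j, D j ≤ Breal := by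
    intro j
    have h1 : d (Fin.castLE hkn j) ≤ d ⟨k - 1, by omega⟩ := by
      refine hdm ?_
      have := j.isLt
      simp only [Fin.le_def, Fin.coe_castLE]
      omega
    have h2 : D j ≤ (d ⟨k - 1, by omega⟩ : ℝ) := by
      rw [hD]; simp only [hdeg j]; exact_mod_cast h1
    rw [hB]
    exact le_add_of_le_of_nonneg h2 hBnn
  have hB2 : ∀ j j' : Fin k, j ≠ j' → D j + D j' ≤ Breal := by
    have key : ∀ j j' : Fin k, (j : ℕ) < (j' : ℕ) → D j + D j' ≤ Breal := by
      intro j j' hlt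
      have hk2 : 2 ≤ k := by have := j'.isLt; omega
      have h1 : d (Fin.castLE hkn j) ≤ d ⟨k - 2, by omega⟩ := by
        refine hdm ?_
        have := j'.isLt
        simp only [Fin.le_def, Fin.coe_castLE]
        omega
      have h2 : d (Fin.castLE hkn j') ≤ d ⟨k - 1, by omega⟩ := by
        refine hdm ?_
        have := j'.isLt
        simp only [Fin.le_def, Fin.coe_castLE]
        omega
      rw [hB, dif_pos hk2, hD]
      simp only [hdeg]
      have c1 : (d (Fin.castLE hkn j) : ℝ) ≤ (d ⟨k - 2, by omega⟩ : ℝ) := by exact_mod_cast h1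
      have c2 : (d (Fin.castLE hkn j') : ℝ) ≤ (d ⟨k - 1, by omega⟩ : ℝ) := by exact_mod_cast h2
      linarith
    intro j j' hne
    rcases lt_or_gt_of_ne (fun h : (j:ℕ) = (j':ℕ) => hne (Fin.ext h)) with h | h
    · exact key j j' h
    · have := key j' j h
      linarith
  have hNB : ∀ p, hN.eigenvalues p ≤ Breal := eig_le_of_rows hN D hrowN hdiagN hB1 hB2
  -- the subspace
  set b := (EuclideanSpace.basisFun (Fin n) ℝ).toBasis with hbdef
  set U : Submodule ℝ (EuclideanSpace ℝ (Fin n)) := Submodule.span ℝ (⇑b '' Set.range ι)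
    with hU
  have hUrank : Module.finrank ℝ U = k := by
    have hli : LinearIndependent ℝ (fun j : Fin k => b (ι j)) :=
      b.linearIndependent.comp ι hinj
    have hR : Set.range (fun j : Fin k => b (ι j)) = ⇑b '' Set.range ι := by
      ext z
      simp [Set.range_comp]
    rw [hU, ← hR, finrank_span_eq_card hli, Fintype.card_fin]
  have hbound : ∀ z : EuclideanSpace ℝ (Fin k),
      (z : Fin k → ℝ) ⬝ᵥ (N *ᵥ z) ≤ Breal * ((z : Fin k → ℝ) ⬝ᵥ (z : Fin k → ℝ)) := by
    intro z
    obtain ⟨hq, hs⟩ := both_expand hN z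
    rw [hq, hs, Finset.mul_sum]
    exact Finset.sum_le_sum fun p _ => mul_le_mul_of_nonneg_right (hNB p) (sq_nonneg _)
  have hc : ∀ x ∈ U, (x : Fin n → ℝ) ⬝ᵥ (G.lapMatrix ℝ *ᵥ x)
      ≤ Breal * ((x : Fin n → ℝ) ⬝ᵥ (x : Fin n → ℝ)) := by
    intro x hx
    have hsupp : ∀ v, v ∉ Set.range ι → (x : Fin n → ℝ) v = 0 := by
      intro v hv
      by_contra h0
      refine hv ?_
      have hs := (b.mem_span_image).mp hx
      have hvmem : v ∈ (b.repr x).support := by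
        rw [Finsupp.mem_support_iff, hbdef,
          (EuclideanSpace.basisFun (Fin n) ℝ).coe_toBasis_repr_apply,
          EuclideanSpace.basisFun_repr]
        exact h0
      exact hs hvmem
    rw [dot_mulVec_restrict _ ι hinj x hsupp, dot_restrict ι hinj x hsupp]
    exact hbound (WithLp.toLp 2 (fun j => x (ι j)))
  have hfinal := eig_sorted_le hK (⟨k - 1, by omega⟩ : Fin n) U
    (by refine le_trans ?_ (le_of_eq hUrank.symm); simp; omega) hc
  rw [hlam]
  rw [hB] at hfinal
  exact hfinal
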